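/- Let d ≥ 1 and let I ⊂ ℤ^d∖{0} be a finite set. Suppose m, l ∈ ℤ^d∖{0} satisfy ⟨m,l⟩ ≠ 0 and c_m, s_m, c_l, s_l ∈ H_∞(I). Then c_{m+l} ∈ H_∞(I) and s_{m+l} ∈ H_∞(I). -/

import Mathlib

open Real MeasureTheory

/-- ⟨x, m⟩ = ∑ x_j m_j for x ∈ ℝ^d, m ∈ ℤ^d. -/
noncomputable def ip (d : ℕ) (x : Fin d → ℝ) (m : Fin d → ℤ) : ℝ :=
  ∑ j, x j * (m j : ℝ)

/-- Integer inner product on ℤ^d. -/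
def ipZ (d : ℕ) (m l : Fin d → ℤ) : ℤ := ∑ j, m j * l j

/-- c_m(x) = cos⟨x,m⟩. -/
noncomputable def cmap (d : ℕ) (m : Fin d → ℤ) : (Fin d → ℝ) → ℝ :=
  fun x => Real.cos (ip d x m)

/-- s_m(x) = sin⟨x,m⟩. -/
noncomputable def smap (d : ℕ) (m : Fin d → ℤ) : (Fin d → ℝ) → ℝ :=
  fun x => Real.sin (ip d x m)

/-- B(φ)(x) = ∑_j (∂_{x_j} φ(x))². -/
noncomputable def Bop (d : ℕ) (φ : (Fin d → ℝ) → ℝ) : (Fin d → ℝ) → ℝ :=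
  fun x => ∑ j, (fderiv ℝ φ x (Pi.single j 1)) ^ 2

/-- Functions representable as θ₀ − ∑_{j=1}^n B(θ_j) with θ's in H, n ≥ 1. -/
noncomputable def BRep (d : ℕ) (H : Set ((Fin d → ℝ) → ℝ)) : Set ((Fin d → ℝ) → ℝ) :=
  { f | ∃ n : ℕ, 1 ≤ n ∧ ∃ θ₀ ∈ H, ∃ θ : Fin n → (Fin d → ℝ) → ℝ,
      (∀ j, θ j ∈ H) ∧ f = θ₀ - ∑ j, Bop d (θ j) }

/-- F(H): f such that both f and −f are representable. -/
noncomputable def Fop (d : ℕ) (H : Set ((Fin d → ℝ) → ℝ)) : Set ((Fin d → ℝ) → ℝ) :=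
  { f | f ∈ BRep d H ∧ -f ∈ BRep d H }

/-- H(I): span of {1} ∪ {c_k, s_k : k ∈ I}. -/
noncomputable def H0 (d : ℕ) (I : Finset (Fin d → ℤ)) : Set ((Fin d → ℝ) → ℝ) :=
  ↑(Submodule.span ℝ
      ({fun _ => (1:ℝ)} ∪ ⋃ k ∈ (I : Set (Fin d → ℤ)), {cmap d k, smap d k}))

noncomputable def HSeq (d : ℕ) (I : Finset (Fin d → ℤ)) : ℕ → Set ((Fin d → ℝ) → ℝ)
  | 0 => H0 d I
  | j + 1 => Fop d (HSeq d I j)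

/-- H_∞(I) = ⋃_j H_j(I). -/
noncomputable def Hinf (d : ℕ) (I : Finset (Fin d → ℤ)) : Set ((Fin d → ℝ) → ℝ) :=
  ⋃ j, HSeq d I j

/-- I generates ℤ^d over ℤ. -/
def IsGenerator (d : ℕ) (I : Finset (Fin d → ℤ)) : Prop :=
  ∀ n : Fin d → ℤ, ∃ a : (Fin d → ℤ) → ℤ, n = ∑ k ∈ I, a k • k

/-- Connectedness condition of Proposition 2.5. -/
def ConnectedSet (d : ℕ) (I : Finset (Fin d → ℤ)) : Prop :=
  ∀ l ∈ I, ∀ m ∈ I, ∃ k : ℕ, ∃ n : Fin (k + 1) → (Fin d → ℤ),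
    (∀ j, n j ∈ I) ∧ ipZ d l (n 0) ≠ 0 ∧
    (∀ j : Fin k, ipZ d (n j.castSucc) (n j.succ) ≠ 0) ∧
    ipZ d (n (Fin.last k)) m ≠ 0

/-- (2πℤ^d)-periodicity for real-valued functions. -/
def Periodic2pi (d : ℕ) (f : (Fin d → ℝ) → ℝ) : Prop :=
  ∀ (x : Fin d → ℝ) (k : Fin d → ℤ), f (x + fun j => 2 * Real.pi * (k j : ℝ)) = f x
lemma bop_zero (d : ℕ) : Bop d (fun _ => (0:ℝ)) = fun _ => 0 := by
  funext x
  simp [Bop]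

lemma bop_smul (d : ℕ) (c : ℝ) (φ : (Fin d → ℝ) → ℝ) :
    Bop d (c • φ) = fun x => c ^ 2 * Bop d φ x := by
  rcases eq_or_ne c 0 with rfl | hc
  · funext x
    simp [Bop, show (0:ℝ) • φ = fun _ => (0:ℝ) by funext y; simp]
  · funext x
    by_cases h : DifferentiableAt ℝ φ x
    · have hd : fderiv ℝ (c • φ) x = c • fderiv ℝ φ x := fderiv_const_smul h c
      simp [Bop, hd, Finset.mul_sum]
      ring_nf
    · have h2 : ¬ DifferentiableAt ℝ (c • φ) x := by
        intro hc2
        have := hc2.const_smul c⁻¹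
        exact h (by simpa [smul_eq_mul, ← mul_assoc, smul_smul, inv_mul_cancel₀ hc, one_smul] using this)
      rw [show Bop d (c • φ) x = ∑ j, (fderiv ℝ (c • φ) x (Pi.single j 1))^2 from rfl]
      rw [fderiv_zero_of_not_differentiableAt h2]
      rw [show Bop d φ x = ∑ j, (fderiv ℝ φ x (Pi.single j 1))^2 from rfl]
      rw [fderiv_zero_of_not_differentiableAt h]
      simp
section Closure

variable {d : ℕ} {H : Set ((Fin d → ℝ) → ℝ)}

lemma brep_mem_self (hf : (fun _ => (0:ℝ)) ∈ H) {f} (h : f ∈ H) : f ∈ BRep d H := by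
  refine ⟨1, le_refl 1, f, h, fun _ => (fun _ => (0:ℝ)), fun _ => hf, ?_⟩
  funext x
  simp [bop_zero]

lemma brep_add {f g} (hf : f ∈ BRep d H) (hg : g ∈ BRep d H)
    (hadd : ∀ a b, a ∈ H → b ∈ H → a + b ∈ H) : f + g ∈ BRep d H := by
  obtain ⟨n, hn, θ₀, hθ₀, θ, hθ, hfe⟩ := hf
  obtain ⟨p, hp, η₀, hη₀, η, hη, hge⟩ := hg
  refine ⟨n + p, le_trans hn (Nat.le_add_right n p), θ₀ + η₀, hadd _ _ hθ₀ hη₀,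
    Fin.append θ η, ?_, ?_⟩
  · intro j
    induction j using Fin.addCases with
    | left i => rw [Fin.append_left]; exact hθ i
    | right i => rw [Fin.append_right]; exact hη i
  · have hsum : ∑ j : Fin (n + p), Bop d (Fin.append θ η j)
        = (∑ j : Fin n, Bop d (θ j)) + ∑ j : Fin p, Bop d (η j) := by
      rw [Fin.sum_univ_add]
      congr 1
      · exact Finset.sum_congr rfl fun i _ => by rw [Fin.append_left]
      · exact Finset.sum_congr rfl fun i _ => by rw [Fin.append_right]
    rw [hsum, hfe, hge]
    abel

lemma brep_smul_nonneg {f} {a : ℝ} (ha : 0 ≤ a) (hf : f ∈ BRep d H)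
    (hsmul : ∀ (c : ℝ) b, b ∈ H → c • b ∈ H) : a • f ∈ BRep d H := by
  obtain ⟨n, hn, θ₀, hθ₀, θ, hθ, hfe⟩ := hf
  refine ⟨n, hn, a • θ₀, hsmul a _ hθ₀, fun j => Real.sqrt a • θ j,
    fun j => hsmul _ _ (hθ j), ?_⟩
  have : ∑ j : Fin n, Bop d (Real.sqrt a • θ j) = a • ∑ j : Fin n, Bop d (θ j) := by
    funext x
    simp only [Finset.sum_apply, Pi.smul_apply, bop_smul, Real.sq_sqrt ha, smul_eq_mul,
      Finset.mul_sum]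
  rw [this, hfe]
  funext x
  simp [mul_sub]

lemma fop_neg {f} (hf : f ∈ Fop d H) : -f ∈ Fop d H :=
  ⟨hf.2, by rw [neg_neg]; exact hf.1⟩

lemma fop_mem_self (h0 : (fun _ => (0:ℝ)) ∈ H)
    (hneg : ∀ b, b ∈ H → -b ∈ H) {f} (h : f ∈ H) : f ∈ Fop d H :=
  ⟨brep_mem_self h0 h, brep_mem_self h0 (hneg f h)⟩

lemma fop_add {f g} (hf : f ∈ Fop d H) (hg : g ∈ Fop d H)
    (hadd : ∀ a b, a ∈ H → b ∈ H → a + b ∈ H) : f + g ∈ Fop d H := by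
  refine ⟨brep_add hf.1 hg.1 hadd, ?_⟩
  rw [neg_add]
  exact brep_add hf.2 hg.2 hadd

lemma fop_smul {f} (a : ℝ) (hf : f ∈ Fop d H)
    (hsmul : ∀ (c : ℝ) b, b ∈ H → c • b ∈ H) : a • f ∈ Fop d H := by
  rcases le_or_gt 0 a with ha | ha
  · exact ⟨brep_smul_nonneg ha hf.1 hsmul,
      by rw [← smul_neg]; exact brep_smul_nonneg ha hf.2 hsmul⟩
  · have h1 : a • f = (-a) • (-f) := by simp
    have h2 : -(a • f) = (-a) • f := by simp
    rw [h1]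
    refine ⟨brep_smul_nonneg (by linarith) (fop_neg hf).1 hsmul, ?_⟩
    rw [← h1, h2]
    exact brep_smul_nonneg (by linarith) hf.1 hsmul

/-- HSeq is closed under constants, addition, and scalar multiplication. -/
lemma hseq_closed (d : ℕ) (I : Finset (Fin d → ℤ)) (j : ℕ) :
    (∀ c : ℝ, (fun _ => c) ∈ HSeq d I j) ∧
    (∀ a b, a ∈ HSeq d I j → b ∈ HSeq d I j → a + b ∈ HSeq d I j) ∧
    (∀ (c : ℝ) b, b ∈ HSeq d I j → c • b ∈ HSeq d I j) := by
  induction j with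
  | zero =>
    have h1 : (fun _ => (1:ℝ)) ∈ HSeq d I 0 :=
      Submodule.subset_span (Set.mem_union_left _ rfl)
    refine ⟨fun c => ?_, fun a b ha hb => ?_, fun c b hb => ?_⟩
    · have := Submodule.smul_mem _ c h1
      rw [show c • (fun _ => (1:ℝ)) = fun _ => c from funext fun _ => by simp] at this
      exact this
    · exact Submodule.add_mem _ ha hb
    · exact Submodule.smul_mem _ c hb
  | succ j ih =>
    obtain ⟨hc, hadd, hsmul⟩ := ih
    have h0 : (fun _ => (0:ℝ)) ∈ HSeq d I j := hc 0
    have hneg : ∀ b, b ∈ HSeq d I j → -b ∈ HSeq d I j := fun b hb => by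
      simpa using hsmul (-1) b hb
    refine ⟨fun c => fop_mem_self h0 hneg (hc c),
      fun a b ha hb => fop_add ha hb hadd,
      fun c b hb => fop_smul c hb hsmul⟩

lemma hseq_succ_subset (d : ℕ) (I : Finset (Fin d → ℤ)) (j : ℕ) :
    HSeq d I j ⊆ HSeq d I (j + 1) := by
  obtain ⟨hc, hadd, hsmul⟩ := hseq_closed d I j
  intro f hf
  exact fop_mem_self (hc 0) (fun b hb => by simpa using hsmul (-1) b hb) hf

lemma hseq_mono (d : ℕ) (I : Finset (Fin d → ℤ)) {j j' : ℕ} (h : j ≤ j') :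
    HSeq d I j ⊆ HSeq d I j' := by
  induction j' with
  | zero => simpa [Nat.le_zero.mp h]
  | succ k ih =>
    rcases Nat.lt_or_ge j (k+1) with h' | h'
    · exact (ih (by omega)).trans (hseq_succ_subset d I k)
    · have : j = k + 1 := by omega
      subst this
      exact subset_rfl

end Closure
section Deriv

variable {d : ℕ}

/-- The continuous linear map x ↦ ⟨x, m⟩. -/
noncomputable def Lmap (d : ℕ) (m : Fin d → ℤ) : (Fin d → ℝ) →L[ℝ] ℝ :=
  ∑ j, (m j : ℝ) • ContinuousLinearMap.proj j

lemma Lmap_apply (m : Fin d → ℤ) (x : Fin d → ℝ) : Lmap d m x = ip d x m := by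
  simp [Lmap, ip, ContinuousLinearMap.sum_apply, mul_comm]

lemma Lmap_single (m : Fin d → ℤ) (j : Fin d) :
    Lmap d m (Pi.single j 1) = (m j : ℝ) := by
  rw [Lmap_apply]
  simp [ip, Pi.single_apply]

lemma hasF (m : Fin d → ℤ) (A B : ℝ) (x : Fin d → ℝ) :
    HasFDerivAt (fun y => A * Real.cos (ip d y m) + B * Real.sin (ip d y m))
      ((-A * Real.sin (ip d x m) + B * Real.cos (ip d x m)) • Lmap d m) x := by
  have hip : HasFDerivAt (fun y => ip d y m) (Lmap d m) x := by
    have := (Lmap d m).hasFDerivAt (x := x)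
    have hfun : (fun y => ip d y m) = ⇑(Lmap d m) := funext fun y => (Lmap_apply m y).symm
    rw [hfun]
    exact this
  have hcos : HasFDerivAt (fun y => Real.cos (ip d y m))
      ((-Real.sin (ip d x m)) • Lmap d m) x :=
    by have := (Real.hasDerivAt_cos (ip d x m)).comp_hasFDerivAt x hip; exact this
  have hsin : HasFDerivAt (fun y => Real.sin (ip d y m))
      ((Real.cos (ip d x m)) • Lmap d m) x :=
    by have := (Real.hasDerivAt_sin (ip d x m)).comp_hasFDerivAt x hip; exact this
  have : HasFDerivAt (fun y => A * Real.cos (ip d y m) + B * Real.sin (ip d y m)) _ x :=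
    (hcos.const_mul A).add (hsin.const_mul B)
  refine this.congr_fderiv ?_
  rw [smul_smul, smul_smul, ← add_smul]
  ring_nf

lemma fderiv_combo (m l : Fin d → ℤ) (A B C D : ℝ) (x : Fin d → ℝ) (j : Fin d) :
    fderiv ℝ (fun y => (A * Real.cos (ip d y m) + B * Real.sin (ip d y m))
        + (C * Real.cos (ip d y l) + D * Real.sin (ip d y l))) x (Pi.single j 1)
      = (-A * Real.sin (ip d x m) + B * Real.cos (ip d x m)) * (m j : ℝ)
        + (-C * Real.sin (ip d x l) + D * Real.cos (ip d x l)) * (l j : ℝ) := by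
  have h : HasFDerivAt (fun y => (A * Real.cos (ip d y m) + B * Real.sin (ip d y m))
      + (C * Real.cos (ip d y l) + D * Real.sin (ip d y l))) _ x :=
    (hasF m A B x).add (hasF l C D x)
  rw [h.fderiv]
  simp [ContinuousLinearMap.add_apply, ContinuousLinearMap.smul_apply, Lmap_single,
    smul_eq_mul]

lemma Bop_combo (m l : Fin d → ℤ) (A B C D : ℝ) (x : Fin d → ℝ) :
    Bop d (fun y => (A * Real.cos (ip d y m) + B * Real.sin (ip d y m))
        + (C * Real.cos (ip d y l) + D * Real.sin (ip d y l))) x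
      = (-A * Real.sin (ip d x m) + B * Real.cos (ip d x m)) ^ 2 * (∑ j, ((m j : ℝ)) ^ 2)
        + (-C * Real.sin (ip d x l) + D * Real.cos (ip d x l)) ^ 2 * (∑ j, ((l j : ℝ)) ^ 2)
        + 2 * (-A * Real.sin (ip d x m) + B * Real.cos (ip d x m))
            * (-C * Real.sin (ip d x l) + D * Real.cos (ip d x l)) * ((ipZ d m l : ℝ)) := by
  have hz : ((ipZ d m l : ℝ)) = ∑ j, (m j : ℝ) * (l j : ℝ) := by
    rw [ipZ]
    push_cast
    rfl
  rw [Bop]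
  simp only [fderiv_combo m l A B C D x]
  rw [hz, Finset.mul_sum, Finset.mul_sum, Finset.mul_sum]
  rw [← Finset.sum_add_distrib, ← Finset.sum_add_distrib]
  exact Finset.sum_congr rfl fun j _ => by ring

lemma ip_add (m l : Fin d → ℤ) (x : Fin d → ℝ) :
    ip d x (m + l) = ip d x m + ip d x l := by
  rw [ip, ip, ip, ← Finset.sum_add_distrib]
  exact Finset.sum_congr rfl fun j _ => by push_cast [Pi.add_apply]; ring

end Deriv
section Key

variable {d : ℕ} {I : Finset (Fin d → ℤ)} {m l : Fin d → ℤ} {J : ℕ}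

lemma combo_mem (hc1 : cmap d m ∈ HSeq d I J) (hs1 : smap d m ∈ HSeq d I J)
    (hc2 : cmap d l ∈ HSeq d I J) (hs2 : smap d l ∈ HSeq d I J) (A B C D : ℝ) :
    (fun y => (A * Real.cos (ip d y m) + B * Real.sin (ip d y m))
        + (C * Real.cos (ip d y l) + D * Real.sin (ip d y l))) ∈ HSeq d I J := by
  obtain ⟨hc, hadd, hsmul⟩ := hseq_closed d I J
  have hmem := hadd _ _ (hadd _ _ (hsmul A _ hc1) (hsmul B _ hs1))
    (hadd _ _ (hsmul C _ hc2) (hsmul D _ hs2))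
  have heq : (A • cmap d m + B • smap d m) + (C • cmap d l + D • smap d l)
      = fun y => (A * Real.cos (ip d y m) + B * Real.sin (ip d y m))
        + (C * Real.cos (ip d y l) + D * Real.sin (ip d y l)) := by
    funext y
    simp [cmap, smap, smul_eq_mul]
  rwa [heq] at hmem

lemma cos_brep (hc1 : cmap d m ∈ HSeq d I J) (hs1 : smap d m ∈ HSeq d I J)
    (hc2 : cmap d l ∈ HSeq d I J) (hs2 : smap d l ∈ HSeq d I J)
    (ε S : ℝ) (hε : ε ^ 2 = 1) :
    (fun x => 2 * S ^ 2 * (ε * (ipZ d m l : ℝ)) * Real.cos (ip d x (m + l)))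
      ∈ BRep d (HSeq d I J) := by
  obtain ⟨hc, hadd, hsmul⟩ := hseq_closed d I J
  refine ⟨2, by norm_num,
    (fun _ => S ^ 2 * ((∑ j, ((m j : ℝ)) ^ 2) + (∑ j, ((l j : ℝ)) ^ 2))), hc _,
    ![fun y => (0 * Real.cos (ip d y m) + S * Real.sin (ip d y m))
        + (0 * Real.cos (ip d y l) + (-(S * ε)) * Real.sin (ip d y l)),
      fun y => (S * Real.cos (ip d y m) + 0 * Real.sin (ip d y m))
        + ((S * ε) * Real.cos (ip d y l) + 0 * Real.sin (ip d y l))], ?_, ?_⟩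
  · intro j
    fin_cases j
    · exact combo_mem hc1 hs1 hc2 hs2 0 S 0 (-(S * ε))
    · exact combo_mem hc1 hs1 hc2 hs2 S 0 (S * ε) 0
  · funext x
    simp only [Pi.sub_apply, Finset.sum_apply, Fin.sum_univ_two, Matrix.cons_val_zero,
      Matrix.cons_val_one, Matrix.head_cons, Pi.add_apply]
    rw [Bop_combo, Bop_combo, ip_add, Real.cos_add]
    have P := Real.sin_sq_add_cos_sq (ip d x m)
    have Q := Real.sin_sq_add_cos_sq (ip d x l)
    linear_combination (S ^ 2 * (∑ j, ((m j : ℝ)) ^ 2)) * P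
      + (S ^ 2 * ε ^ 2 * (∑ j, ((l j : ℝ)) ^ 2)) * Q
      + (S ^ 2 * (∑ j, ((l j : ℝ)) ^ 2)) * hε

lemma sin_brep (hc1 : cmap d m ∈ HSeq d I J) (hs1 : smap d m ∈ HSeq d I J)
    (hc2 : cmap d l ∈ HSeq d I J) (hs2 : smap d l ∈ HSeq d I J)
    (ε S : ℝ) (hε : ε ^ 2 = 1) :
    (fun x => 2 * S ^ 2 * (ε * (ipZ d m l : ℝ)) * Real.sin (ip d x (m + l)))
      ∈ BRep d (HSeq d I J) := by
  obtain ⟨hc, hadd, hsmul⟩ := hseq_closed d I J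
  refine ⟨2, by norm_num,
    (fun _ => S ^ 2 * ((∑ j, ((m j : ℝ)) ^ 2) + (∑ j, ((l j : ℝ)) ^ 2))), hc _,
    ![fun y => (S * Real.cos (ip d y m) + 0 * Real.sin (ip d y m))
        + (0 * Real.cos (ip d y l) + (S * ε) * Real.sin (ip d y l)),
      fun y => (0 * Real.cos (ip d y m) + S * Real.sin (ip d y m))
        + ((S * ε) * Real.cos (ip d y l) + 0 * Real.sin (ip d y l))], ?_, ?_⟩
  · intro j
    fin_cases j
    · exact combo_mem hc1 hs1 hc2 hs2 S 0 0 (S * ε)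
    · exact combo_mem hc1 hs1 hc2 hs2 0 S (S * ε) 0
  · funext x
    simp only [Pi.sub_apply, Finset.sum_apply, Fin.sum_univ_two, Matrix.cons_val_zero,
      Matrix.cons_val_one, Matrix.head_cons, Pi.add_apply]
    rw [Bop_combo, Bop_combo, ip_add, Real.sin_add]
    have P := Real.sin_sq_add_cos_sq (ip d x m)
    have Q := Real.sin_sq_add_cos_sq (ip d x l)
    linear_combination (S ^ 2 * (∑ j, ((m j : ℝ)) ^ 2)) * P
      + (S ^ 2 * ε ^ 2 * (∑ j, ((l j : ℝ)) ^ 2)) * Q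
      + (S ^ 2 * (∑ j, ((l j : ℝ)) ^ 2)) * hε

end Key
/-- if ⟨m,l⟩ ≠ 0 and c_m, s_m, c_l, s_l ∈ H_∞(I), then
c_{m+l}, s_{m+l} ∈ H_∞(I). -/
theorem stmt6 (d : ℕ) (hd : 1 ≤ d) (I : Finset (Fin d → ℤ)) (hI : ∀ k ∈ I, k ≠ 0)
    (m l : Fin d → ℤ) (hm : m ≠ 0) (hl : l ≠ 0) (hml : ipZ d m l ≠ 0)
    (hcm : cmap d m ∈ Hinf d I) (hsm : smap d m ∈ Hinf d I)
    (hcl : cmap d l ∈ Hinf d I) (hsl : smap d l ∈ Hinf d I) :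
    cmap d (m + l) ∈ Hinf d I ∧ smap d (m + l) ∈ Hinf d I := by
  simp only [Hinf, Set.mem_iUnion] at hcm hsm hcl hsl
  obtain ⟨j1, h1⟩ := hcm
  obtain ⟨j2, h2⟩ := hsm
  obtain ⟨j3, h3⟩ := hcl
  obtain ⟨j4, h4⟩ := hsl
  set J : ℕ := max (max j1 j2) (max j3 j4) with hJ
  have hc1 : cmap d m ∈ HSeq d I J :=
    hseq_mono d I (le_trans (le_max_left j1 j2) (le_max_left _ _)) h1
  have hs1 : smap d m ∈ HSeq d I J :=
    hseq_mono d I (le_trans (le_max_right j1 j2) (le_max_left _ _)) h2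
  have hc2 : cmap d l ∈ HSeq d I J :=
    hseq_mono d I (le_trans (le_max_left j3 j4) (le_max_right _ _)) h3
  have hs2 : smap d l ∈ HSeq d I J :=
    hseq_mono d I (le_trans (le_max_right j3 j4) (le_max_right _ _)) h4
  have hq0 : ((ipZ d m l : ℝ)) ≠ 0 := Int.cast_ne_zero.mpr hml
  set q : ℝ := ((ipZ d m l : ℝ)) with hqdef
  set S : ℝ := (Real.sqrt (2 * |q|))⁻¹ with hSdef
  have habs : (0:ℝ) < 2 * |q| := by positivity
  have hS2 : S ^ 2 = (2 * |q|)⁻¹ := by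
    rw [hSdef, inv_pow, Real.sq_sqrt (le_of_lt habs)]
  set ε : ℝ := if 0 < q then 1 else -1 with hεdef
  have hε2 : ε ^ 2 = 1 := by
    by_cases h : 0 < q <;> simp [hεdef, h]
  have hεneg2 : (-ε) ^ 2 = 1 := by rw [neg_pow]; simp [hε2]
  have hεq : ε * q = |q| := by
    rcases lt_or_ge 0 q with h | h
    · simp [hεdef, h, abs_of_pos h]
    · have hlt : q < 0 := lt_of_le_of_ne h hq0
      simp [hεdef, not_lt.mpr h, abs_of_neg hlt]
  have hcoef : 2 * S ^ 2 * (ε * q) = 1 := by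
    rw [hS2, hεq]
    field_simp
  have hcoefneg : 2 * S ^ 2 * (-ε * q) = -1 := by
    rw [neg_mul, mul_neg, hcoef]
  have hmemc : cmap d (m + l) ∈ HSeq d I (J + 1) := by
    have he1 : cmap d (m + l) = fun x => 2 * S ^ 2 * (ε * q) * Real.cos (ip d x (m + l)) := by
      funext x
      rw [hcoef, cmap]
      ring
    have he2 : -cmap d (m + l)
        = fun x => 2 * S ^ 2 * (-ε * q) * Real.cos (ip d x (m + l)) := by
      funext x
      rw [Pi.neg_apply, hcoefneg, cmap]
      ring
    exact ⟨by rw [he1]; exact cos_brep hc1 hs1 hc2 hs2 ε S hε2,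
      by rw [he2]; exact cos_brep hc1 hs1 hc2 hs2 (-ε) S hεneg2⟩
  have hmems : smap d (m + l) ∈ HSeq d I (J + 1) := by
    have he1 : smap d (m + l) = fun x => 2 * S ^ 2 * (ε * q) * Real.sin (ip d x (m + l)) := by
      funext x
      rw [hcoef, smap]
      ring
    have he2 : -smap d (m + l)
        = fun x => 2 * S ^ 2 * (-ε * q) * Real.sin (ip d x (m + l)) := by
      funext x
      rw [Pi.neg_apply, hcoefneg, smap]
      ring
    exact ⟨by rw [he1]; exact sin_brep hc1 hs1 hc2 hs2 ε S hε2,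
      by rw [he2]; exact sin_brep hc1 hs1 hc2 hs2 (-ε) S hεneg2⟩
  exact ⟨Set.mem_iUnion.mpr ⟨J + 1, hmemc⟩, Set.mem_iUnion.mpr ⟨J + 1, hmems⟩⟩
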